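/- Let g : (r_−, r_+) → ℝ be defined by g(r) = Π_{α∈I}|(r−r_α)/(𝔯−r_α)|^{c_α} with positive exponents c_+ on the factor (r_+−r) [i.e. the Regge–Wheeler relation e^{−Λx/(3A_+r_+²)} = g_+(r)]. Then the asymptotic estimate holds: F(r(x)) + |r(x) − r_±| ≤ C·exp(2κ_± x) as x → ±∞, where 2κ_± = F'(r_±) and x(r) = −(3/Λ)Σ_α A_α r_α² ln|(r−r_α)/(𝔯−r_α)|. -/

import Mathlib

open Filter Topology

private lemma log_abs_bound {a b u : ℝ} (ha : 0 < a) (hau : a ≤ u) (hub : u ≤ b) :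
    |Real.log u| ≤ max |Real.log a| |Real.log b| := by
  have h1 : Real.log a ≤ Real.log u := Real.log_le_log ha hau
  have h2 : Real.log u ≤ Real.log b := Real.log_le_log (ha.trans_le hau) hub
  rw [abs_le]
  constructor
  · have := neg_abs_le (Real.log a)
    have := le_max_left |Real.log a| |Real.log b|
    linarith
  · have := le_abs_self (Real.log b)
    have := le_max_right |Real.log a| |Real.log b|
    linarith


private lemma Fb1 (Λ rn rc rm rp r : ℝ) (hΛ : 0 < Λ) (hrn0 : rn < 0) (hrc0 : 0 < rc)
    (hrcm : rc < rm) (hrmp : rm < rp) (hr1 : rm < r) (hr2 : r < rp) :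
    Λ / (3 * r ^ 2) * ((r - rn) * (r - rc) * (r - rm)) * (rp - r) ≤
      Λ / (3 * rm ^ 2) * ((rp - rn) * (rp - rc) * (rp - rm)) * (rp - r) := by
  have hrm0 : 0 < rm := hrc0.trans hrcm
  have h1 : (0:ℝ) < r - rn := by linarith
  have h2 : (0:ℝ) < r - rc := by linarith
  have h3 : (0:ℝ) < r - rm := by linarith
  gcongr <;> nlinarith [mul_pos (mul_pos h1 h2) h3, mul_pos hrm0 hrm0,
    mul_pos (hrm0.trans hr1) (hrm0.trans hr1)]

private lemma Fb2 (Λ rn rc rm rp r : ℝ) (hΛ : 0 < Λ) (hrn0 : rn < 0) (hrc0 : 0 < rc)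
    (hrcm : rc < rm) (hrmp : rm < rp) (hr1 : rm < r) (hr2 : r < rp) :
    Λ / (3 * r ^ 2) * ((r - rn) * (r - rc) * (rp - r)) * (r - rm) ≤
      Λ / (3 * rm ^ 2) * ((rp - rn) * (rp - rc) * (rp - rm)) * (r - rm) := by
  have hrm0 : 0 < rm := hrc0.trans hrcm
  have h1 : (0:ℝ) < r - rn := by linarith
  have h2 : (0:ℝ) < r - rc := by linarith
  have h4 : (0:ℝ) < rp - r := by linarith
  gcongr <;> nlinarith [mul_pos (mul_pos h1 h2) h4, mul_pos hrm0 hrm0,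
    mul_pos (hrm0.trans hr1) (hrm0.trans hr1)]

set_option maxHeartbeats 1000000 in
/-- Exponential convergence at the horizons in the Regge–Wheeler coordinate: with
`F(r) = 1 - 2M/r + Q²/r² - Λr²/3` positive on `(r_-, r_+)`, `x(r) = -(3/Λ) Σ_α A_α r_α²
ln|(r-r_α)/(𝔯-r_α)|` (so `x(𝔯) = 0`), and `rfun` the inverse of `x`, one has
`F(r(x)) + |r(x) - r_±| ≤ C e^{2κ_± x}` as `x → ±∞`, where `2κ_± = F'(r_±)`. -/
theorem stmt14 (M Q Λ : ℝ) (hM : 0 < M) (hΛ : 0 < Λ)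
    (rn rc rm rp 𝔯 : ℝ) (hord : rn < 0 ∧ 0 < rc ∧ rc < rm ∧ rm < rp)
    (h𝔯 : 𝔯 ∈ Set.Ioo rm rp)
    (F : ℝ → ℝ)
    (hF : ∀ r : ℝ, r ≠ 0 → F r = 1 - 2 * M / r + Q ^ 2 / r ^ 2 - Λ * r ^ 2 / 3)
    (hfact : ∀ r : ℝ, r ≠ 0 →
      F r = -(Λ / (3 * r ^ 2)) * ((r - rn) * (r - rc) * (r - rm) * (r - rp)))
    (hFpos : ∀ r ∈ Set.Ioo rm rp, 0 < F r)
    (An Ac Am Ap : ℝ)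
    (hAn : An = ((rn - rc) * (rn - rm) * (rn - rp))⁻¹)
    (hAc : Ac = ((rc - rn) * (rc - rm) * (rc - rp))⁻¹)
    (hAm : Am = ((rm - rn) * (rm - rc) * (rm - rp))⁻¹)
    (hAp : Ap = ((rp - rn) * (rp - rc) * (rp - rm))⁻¹)
    (X : ℝ → ℝ)
    (hX : ∀ r ∈ Set.Ioo rm rp, X r = -(3 / Λ) *
      (An * rn ^ 2 * Real.log |(r - rn) / (𝔯 - rn)|
        + Ac * rc ^ 2 * Real.log |(r - rc) / (𝔯 - rc)|
        + Am * rm ^ 2 * Real.log |(r - rm) / (𝔯 - rm)|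
        + Ap * rp ^ 2 * Real.log |(r - rp) / (𝔯 - rp)|))
    (rfun : ℝ → ℝ)
    (hrfun : ∀ r ∈ Set.Ioo rm rp, rfun (X r) = r)
    (hrange : ∀ x : ℝ, rfun x ∈ Set.Ioo rm rp)
    (κm κp : ℝ) (hκm : HasDerivAt F (2 * κm) rm) (hκp : HasDerivAt F (2 * κp) rp) :
    ∃ C : ℝ, 0 < C ∧
      (∀ᶠ x in atTop, F (rfun x) + |rfun x - rp| ≤ C * Real.exp (2 * κp * x)) ∧
      (∀ᶠ x in atBot, F (rfun x) + |rfun x - rm| ≤ C * Real.exp (2 * κm * x)) := by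
  obtain ⟨hrn0, hrc0, hrcm, hrmp⟩ := hord
  obtain ⟨h𝔯1, h𝔯2⟩ := h𝔯
  have hrm0 : 0 < rm := hrc0.trans hrcm
  have hrp0 : 0 < rp := hrm0.trans hrmp
  have hΛ0 : Λ ≠ 0 := ne_of_gt hΛ
  have hrmne : rm ≠ 0 := ne_of_gt hrm0
  have hrpne : rp ≠ 0 := ne_of_gt hrp0
  have hmn : 0 < rm - rn := by linarith
  have hmc : 0 < rm - rc := by linarith
  have hpn : 0 < rp - rn := by linarith
  have hpc : 0 < rp - rc := by linarith
  have hpm : 0 < rp - rm := by linarith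
  have h𝔯n : 0 < 𝔯 - rn := by linarith
  have h𝔯c : 0 < 𝔯 - rc := by linarith
  have h𝔯m : 0 < 𝔯 - rm := by linarith
  have hp𝔯 : 0 < rp - 𝔯 := by linarith
  have emn : rm - rn ≠ 0 := ne_of_gt hmn
  have emc : rm - rc ≠ 0 := ne_of_gt hmc
  have epn : rp - rn ≠ 0 := ne_of_gt hpn
  have epc : rp - rc ≠ 0 := ne_of_gt hpc
  have epm : rp - rm ≠ 0 := ne_of_gt hpm
  have emp : rm - rp ≠ 0 := by intro h; exact epm (by linarith)
  set Ln : ℝ → ℝ := fun r => Real.log |(r - rn) / (𝔯 - rn)| with hLndef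
  set Lc : ℝ → ℝ := fun r => Real.log |(r - rc) / (𝔯 - rc)| with hLcdef
  set Lm : ℝ → ℝ := fun r => Real.log |(r - rm) / (𝔯 - rm)| with hLmdef
  set Lp : ℝ → ℝ := fun r => Real.log |(r - rp) / (𝔯 - rp)| with hLpdef
  set cn : ℝ := -(3 / Λ) * (An * rn ^ 2) with hcndef
  set cc : ℝ := -(3 / Λ) * (Ac * rc ^ 2) with hccdef
  set cm : ℝ := -(3 / Λ) * (Am * rm ^ 2) with hcmdef
  set cp : ℝ := -(3 / Λ) * (Ap * rp ^ 2) with hcpdef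
  have hXeq : ∀ r ∈ Set.Ioo rm rp,
      X r = cn * Ln r + cc * Lc r + cm * Lm r + cp * Lp r := by
    intro r hr
    rw [hX r hr, hcndef, hccdef, hcmdef, hcpdef]
    ring
  have h3Λ : 0 < 3 / Λ := by positivity
  have hAmval : Am < 0 := by
    rw [hAm]
    exact inv_lt_zero.mpr (mul_neg_of_pos_of_neg (mul_pos hmn hmc) (by linarith))
  have hcm_pos : 0 < cm := by
    rw [hcmdef]
    exact mul_pos_of_neg_of_neg (neg_lt_zero.mpr h3Λ)
      (mul_neg_of_neg_of_pos hAmval (by positivity))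
  have hApval : 0 < Ap := by
    rw [hAp]
    positivity
  have hcp_neg : cp < 0 := by
    rw [hcpdef]
    exact mul_neg_of_neg_of_pos (neg_lt_zero.mpr h3Λ) (by positivity)
  -- derivative values at the horizons
  have hderiv : ∀ s a b c : ℝ, s ≠ 0 →
      (∀ r : ℝ, r ≠ 0 → F r = -(Λ / (3 * r ^ 2)) * ((r - a) * (r - b) * (r - c) * (r - s))) →
      HasDerivAt F (-(Λ / (3 * s ^ 2)) * ((s - a) * (s - b) * (s - c))) s := by
    intro s a b c hs hfs
    have hgd : DifferentiableAt ℝ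
        (fun r : ℝ => -(Λ / (3 * r ^ 2)) * ((r - a) * (r - b) * (r - c))) s := by
      apply DifferentiableAt.mul
      · apply DifferentiableAt.neg
        exact (differentiableAt_const Λ).div (by fun_prop)
          (mul_ne_zero three_ne_zero (pow_ne_zero 2 hs))
      · fun_prop
    have h1 := hgd.hasDerivAt.mul ((hasDerivAt_id s).sub_const s)
    simp only [id_eq, sub_self, mul_zero, mul_one, zero_add] at h1
    apply h1.congr_of_eventuallyEq
    filter_upwards [eventually_ne_nhds hs] with r hr
    rw [hfs r hr]; simp only [Pi.mul_apply]; ring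
  have h2κp : 2 * κp = -(Λ / (3 * rp ^ 2)) * ((rp - rn) * (rp - rc) * (rp - rm)) := by
    exact hκp.unique (hderiv rp rn rc rm hrpne (fun r hr => hfact r hr))
  have h2κm : 2 * κm = -(Λ / (3 * rm ^ 2)) * ((rm - rn) * (rm - rc) * (rm - rp)) := by
    apply hκm.unique
    have := hderiv rm rn rc rp hrmne (fun r hr => by rw [hfact r hr]; ring)
    exact this
  have hκp_neg : 2 * κp < 0 := by
    rw [h2κp]
    have h1 : 0 < Λ / (3 * rp ^ 2) := by positivity
    exact mul_neg_of_neg_of_pos (neg_lt_zero.mpr h1) (by positivity)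
  have hκm_pos : 0 < 2 * κm := by
    rw [h2κm]
    have h1 : 0 < Λ / (3 * rm ^ 2) := by positivity
    exact mul_pos_of_neg_of_neg (neg_lt_zero.mpr h1)
      (mul_neg_of_pos_of_neg (mul_pos hmn hmc) (by linarith))
  have hcpκ : cp * (2 * κp) = 1 := by
    rw [hcpdef, hAp, h2κp]
    field_simp
  have hcmκ : cm * (2 * κm) = 1 := by
    rw [hcmdef, hAm, h2κm]
    field_simp
  -- bounds for the logs on the interval
  set Kn : ℝ := max |Real.log ((rm - rn) / (𝔯 - rn))| |Real.log ((rp - rn) / (𝔯 - rn))| with hKn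
  set Kc : ℝ := max |Real.log ((rm - rc) / (𝔯 - rc))| |Real.log ((rp - rc) / (𝔯 - rc))| with hKc
  set Km : ℝ := Real.log ((rp - rm) / (𝔯 - rm)) with hKm
  set Kp : ℝ := Real.log ((rp - rm) / (rp - 𝔯)) with hKp
  have hLn_bound : ∀ r ∈ Set.Ioo rm rp, |Ln r| ≤ Kn := by
    intro r hr
    have h1 : 0 < r - rn := by have := hr.1; linarith
    have h2 : Ln r = Real.log ((r - rn) / (𝔯 - rn)) := by
      simp only [hLndef]
      rw [abs_of_pos (by positivity)]
    rw [h2]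
    refine log_abs_bound (by positivity) ?_ ?_
    · gcongr <;> linarith [hr.1, hr.2]
    · gcongr
      linarith [hr.2]
  have hLc_bound : ∀ r ∈ Set.Ioo rm rp, |Lc r| ≤ Kc := by
    intro r hr
    have h1 : 0 < r - rc := by have := hr.1; linarith
    have h2 : Lc r = Real.log ((r - rc) / (𝔯 - rc)) := by
      simp only [hLcdef]
      rw [abs_of_pos (by positivity)]
    rw [h2]
    refine log_abs_bound (by positivity) ?_ ?_
    · gcongr <;> linarith [hr.1, hr.2]
    · gcongr
      linarith [hr.2]
  have hLm_bound : ∀ r ∈ Set.Ioo rm rp, Lm r ≤ Km := by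
    intro r hr
    have h1 : 0 < r - rm := by have := hr.1; linarith
    have h2 : Lm r = Real.log ((r - rm) / (𝔯 - rm)) := by
      simp only [hLmdef]
      rw [abs_of_pos (by positivity)]
    rw [h2, hKm]
    apply Real.log_le_log (by positivity)
    gcongr
    linarith [hr.2]
  have hLp_bound : ∀ r ∈ Set.Ioo rm rp, Lp r ≤ Kp := by
    intro r hr
    have h1 : r - rp < 0 := by have := hr.2; linarith
    have h2 : Lp r = Real.log ((rp - r) / (rp - 𝔯)) := by
      simp only [hLpdef]
      congr 1
      rw [abs_div, abs_of_neg h1, abs_of_neg (by linarith : 𝔯 - rp < 0)]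
      ring_nf
    rw [h2, hKp]
    apply Real.log_le_log (div_pos (by linarith [hr.2]) hp𝔯)
    gcongr
    linarith [hr.1]
  -- positivity of Lp argument style facts
  -- upper bound for G and lower bound for H
  set B : ℝ := |cn| * Kn + |cc| * Kc + cm * Km with hB
  set B' : ℝ := -(|cn| * Kn) - |cc| * Kc + cp * Kp with hB'
  have hG_le : ∀ r ∈ Set.Ioo rm rp, cn * Ln r + cc * Lc r + cm * Lm r ≤ B := by
    intro r hr
    have h1 : cn * Ln r ≤ |cn| * Kn := by
      calc cn * Ln r ≤ |cn * Ln r| := le_abs_self _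
        _ = |cn| * |Ln r| := abs_mul _ _
        _ ≤ |cn| * Kn := mul_le_mul_of_nonneg_left (hLn_bound r hr) (abs_nonneg _)
    have h2 : cc * Lc r ≤ |cc| * Kc := by
      calc cc * Lc r ≤ |cc * Lc r| := le_abs_self _
        _ = |cc| * |Lc r| := abs_mul _ _
        _ ≤ |cc| * Kc := mul_le_mul_of_nonneg_left (hLc_bound r hr) (abs_nonneg _)
    have h3 : cm * Lm r ≤ cm * Km :=
      mul_le_mul_of_nonneg_left (hLm_bound r hr) (le_of_lt hcm_pos)
    rw [hB]; linarith
  have hH_ge : ∀ r ∈ Set.Ioo rm rp, B' ≤ cn * Ln r + cc * Lc r + cp * Lp r := by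
    intro r hr
    have h1 : -(|cn| * Kn) ≤ cn * Ln r := by
      have : |cn * Ln r| ≤ |cn| * Kn := by
        rw [abs_mul]
        exact mul_le_mul_of_nonneg_left (hLn_bound r hr) (abs_nonneg _)
      have := neg_abs_le (cn * Ln r)
      linarith [neg_le_neg this]
    have h2 : -(|cc| * Kc) ≤ cc * Lc r := by
      have h : |cc * Lc r| ≤ |cc| * Kc := by
        rw [abs_mul]
        exact mul_le_mul_of_nonneg_left (hLc_bound r hr) (abs_nonneg _)
      have := neg_abs_le (cc * Lc r)
      linarith [neg_le_neg h]
    have h3 : cp * Kp ≤ cp * Lp r :=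
      mul_le_mul_of_nonpos_left (hLp_bound r hr) (le_of_lt hcp_neg)
    rw [hB']; linarith
  -- F bounds
  set K : ℝ := Λ / (3 * rm ^ 2) * ((rp - rn) * (rp - rc) * (rp - rm)) with hKdef
  have hK_pos : 0 < K := by rw [hKdef]; positivity
  have hF_facts : ∀ r ∈ Set.Ioo rm rp,
      F r ≤ K * (rp - r) ∧ F r ≤ K * (r - rm) := by
    intro r hr
    obtain ⟨hr1, hr2⟩ := hr
    have hrne : r ≠ 0 := ne_of_gt (hrm0.trans hr1)
    constructor
    · have hfr : F r = Λ / (3 * r ^ 2) * ((r - rn) * (r - rc) * (r - rm)) * (rp - r) := by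
        rw [hfact r hrne]; ring
      rw [hfr, hKdef]
      exact Fb1 Λ rn rc rm rp r hΛ hrn0 hrc0 hrcm hrmp hr1 hr2
    · have hfr : F r = Λ / (3 * r ^ 2) * ((r - rn) * (r - rc) * (rp - r)) * (r - rm) := by
        rw [hfact r hrne]; ring
      rw [hfr, hKdef]
      exact Fb2 Λ rn rc rm rp r hΛ hrn0 hrc0 hrcm hrmp hr1 hr2
  -- continuity of X on the interval
  have hcont_log : ∀ q w : ℝ, (∀ r ∈ Set.Ioo rm rp, r - q ≠ 0) → w ≠ 0 →
      ContinuousOn (fun r => Real.log |(r - q) / w|) (Set.Ioo rm rp) := by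
    intro q w hq hw
    apply ContinuousOn.log
    · fun_prop
    · intro r hr
      exact abs_ne_zero.mpr (div_ne_zero (hq r hr) hw)
  have hXcont : ContinuousOn X (Set.Ioo rm rp) := by
    refine ContinuousOn.congr ?_ (fun r hr => hXeq r hr)
    refine (((continuousOn_const.mul ?_).add (continuousOn_const.mul ?_)).add
      (continuousOn_const.mul ?_)).add (continuousOn_const.mul ?_)
    · exact hcont_log rn (𝔯 - rn) (fun r hr => by have := hr.1; intro h; linarith [sub_eq_zero.mp h]) (ne_of_gt h𝔯n)
    · exact hcont_log rc (𝔯 - rc) (fun r hr => by have := hr.1; intro h; linarith [sub_eq_zero.mp h]) (ne_of_gt h𝔯c)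
    · exact hcont_log rm (𝔯 - rm) (fun r hr => sub_ne_zero.mpr (ne_of_gt hr.1)) (ne_of_gt h𝔯m)
    · exact hcont_log rp (𝔯 - rp) (fun r hr => sub_ne_zero.mpr (ne_of_lt hr.2))
        (by intro h; linarith [sub_eq_zero.mp h])
  -- limits of X at the endpoints
  have hIoo_m : Set.Ioo rm rp ∈ 𝓝[>] rm := Ioo_mem_nhdsGT_of_mem ⟨le_refl rm, hrmp⟩
  have hIoo_p : Set.Ioo rm rp ∈ 𝓝[<] rp := Ioo_mem_nhdsLT_of_mem ⟨hrmp, le_refl rp⟩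
  have hfin_m : Tendsto (fun r => cn * Ln r + cc * Lc r + cp * Lp r) (𝓝[>] rm)
      (𝓝 (cn * Ln rm + cc * Lc rm + cp * Lp rm)) := by
    have hca : ContinuousAt (fun r => cn * Ln r + cc * Lc r + cp * Lp r) rm := by
      refine ((continuousAt_const.mul ?_).add (continuousAt_const.mul ?_)).add
        (continuousAt_const.mul ?_)
      · exact ContinuousAt.log (by fun_prop) (abs_ne_zero.mpr (div_ne_zero (ne_of_gt hmn) (ne_of_gt h𝔯n)))
      · exact ContinuousAt.log (by fun_prop) (abs_ne_zero.mpr (div_ne_zero (ne_of_gt hmc) (ne_of_gt h𝔯c)))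
      · exact ContinuousAt.log (by fun_prop) (abs_ne_zero.mpr (div_ne_zero (by intro h; linarith [sub_eq_zero.mp h]) (by intro h; linarith [sub_eq_zero.mp h])))
    exact hca.tendsto.mono_left nhdsWithin_le_nhds
  have hfin_p : Tendsto (fun r => cn * Ln r + cc * Lc r + cm * Lm r) (𝓝[<] rp)
      (𝓝 (cn * Ln rp + cc * Lc rp + cm * Lm rp)) := by
    have hca : ContinuousAt (fun r => cn * Ln r + cc * Lc r + cm * Lm r) rp := by
      refine ((continuousAt_const.mul ?_).add (continuousAt_const.mul ?_)).add
        (continuousAt_const.mul ?_)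
      · exact ContinuousAt.log (by fun_prop) (abs_ne_zero.mpr (div_ne_zero (ne_of_gt hpn) (ne_of_gt h𝔯n)))
      · exact ContinuousAt.log (by fun_prop) (abs_ne_zero.mpr (div_ne_zero (ne_of_gt hpc) (ne_of_gt h𝔯c)))
      · exact ContinuousAt.log (by fun_prop) (abs_ne_zero.mpr (div_ne_zero (ne_of_gt hpm) (ne_of_gt h𝔯m)))
    exact hca.tendsto.mono_left nhdsWithin_le_nhds
  have hLm_bot : Tendsto Lm (𝓝[>] rm) atBot := by
    have h0 : Tendsto (fun r => |(r - rm) / (𝔯 - rm)|) (𝓝[>] rm) (𝓝[>] 0) := by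
      rw [tendsto_nhdsWithin_iff]
      constructor
      · have hca : ContinuousAt (fun r : ℝ => |(r - rm) / (𝔯 - rm)|) rm := by fun_prop
        have h' := hca.tendsto.mono_left (nhdsWithin_le_nhds (s := Set.Ioi rm))
        simpa using h'
      · filter_upwards [self_mem_nhdsWithin] with r hr
        exact abs_pos.mpr (div_ne_zero (ne_of_gt (sub_pos.mpr hr)) (ne_of_gt h𝔯m))
    exact Real.tendsto_log_nhdsGT_zero.comp h0
  have hLp_bot : Tendsto Lp (𝓝[<] rp) atBot := by
    have h0 : Tendsto (fun r => |(r - rp) / (𝔯 - rp)|) (𝓝[<] rp) (𝓝[>] 0) := by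
      rw [tendsto_nhdsWithin_iff]
      constructor
      · have hca : ContinuousAt (fun r : ℝ => |(r - rp) / (𝔯 - rp)|) rp := by fun_prop
        have h' := hca.tendsto.mono_left (nhdsWithin_le_nhds (s := Set.Iio rp))
        simpa using h'
      · filter_upwards [self_mem_nhdsWithin] with r hr
        exact abs_pos.mpr (div_ne_zero (ne_of_lt (sub_neg.mpr hr)) ((by linarith : 𝔯 - rp < (0:ℝ)).ne))
    exact Real.tendsto_log_nhdsGT_zero.comp h0
  have hXm : Tendsto X (𝓝[>] rm) atBot := by
    refine Tendsto.congr' ?_ (hfin_m.add_atBot (Tendsto.const_mul_atBot hcm_pos hLm_bot))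
    filter_upwards [hIoo_m] with r hr
    rw [hXeq r hr]; ring
  have hXp : Tendsto X (𝓝[<] rp) atTop := by
    refine Tendsto.congr' ?_ (hfin_p.add_atTop (Tendsto.const_mul_atBot_of_neg hcp_neg hLp_bot))
    filter_upwards [hIoo_p] with r hr
    rw [hXeq r hr]
  -- surjectivity of X, hence X (rfun x) = x
  have hsurj : ∀ x : ℝ, X (rfun x) = x := by
    intro x
    have hea : ∀ᶠ r in 𝓝[>] rm, X r < x ∧ r ∈ Set.Ioo rm rp :=
      (hXm.eventually (eventually_lt_atBot x)).and hIoo_m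
    obtain ⟨a, hax, haI⟩ := hea.exists
    have heb : ∀ᶠ r in 𝓝[<] rp, x < X r ∧ r ∈ Set.Ioo rm rp :=
      (hXp.eventually (eventually_gt_atTop x)).and hIoo_p
    obtain ⟨b, hbx, hbI⟩ := heb.exists
    have hsub : Set.uIcc a b ⊆ Set.Ioo rm rp := Set.ordConnected_Ioo.uIcc_subset haI hbI
    obtain ⟨c, hcmem, hcx⟩ := intermediate_value_uIcc (hXcont.mono hsub)
      (Set.Icc_subset_uIcc ⟨le_of_lt hax, le_of_lt hbx⟩)
    have hcI : c ∈ Set.Ioo rm rp := hsub hcmem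
    rw [← hcx, hrfun c hcI]
  -- the constant
  set Cp : ℝ := (K + 1) * ((rp - 𝔯) * Real.exp (-(2 * κp) * B)) with hCpdef
  set Cm : ℝ := (K + 1) * ((𝔯 - rm) * Real.exp (-(2 * κm) * B')) with hCmdef
  have hCp_pos : 0 < Cp := mul_pos (by linarith) (mul_pos hp𝔯 (Real.exp_pos _))
  have hCm_pos : 0 < Cm := mul_pos (by linarith) (mul_pos h𝔯m (Real.exp_pos _))
  refine ⟨Cp + Cm, by linarith, ?_, ?_⟩
  · -- at +infinity
    apply Eventually.of_forall
    intro x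
    set r := rfun x with hrdef
    have hrI := hrange x
    have hxr : X r = x := hsurj x
    have hx : x = cn * Ln r + cc * Lc r + cm * Lm r + cp * Lp r := by
      rw [← hxr, hXeq r hrI]
    have hLp_eq : Lp r = 2 * κp * x - 2 * κp * (cn * Ln r + cc * Lc r + cm * Lm r) := by
      linear_combination (-(2 * κp)) * hx - Lp r * hcpκ
    have h2 : Lp r = Real.log ((rp - r) / (rp - 𝔯)) := by
      simp only [hLpdef]
      congr 1
      rw [abs_div, abs_of_neg (by linarith [hrI.2] : r - rp < 0),
        abs_of_neg (by linarith : 𝔯 - rp < 0)]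
      ring_nf
    have hexp : Real.exp (Lp r) = (rp - r) / (rp - 𝔯) := by
      rw [h2, Real.exp_log (div_pos (by linarith [hrI.2]) hp𝔯)]
    have hrp_r : rp - r = (rp - 𝔯) * Real.exp (Lp r) := by
      rw [hexp]; field_simp
    have hexp_le : Real.exp (Lp r) ≤ Real.exp (-(2 * κp) * B) * Real.exp (2 * κp * x) := by
      rw [← Real.exp_add]
      apply Real.exp_le_exp.mpr
      have hGB := hG_le r hrI
      have hmul := mul_le_mul_of_nonneg_left hGB (show (0:ℝ) ≤ -(2 * κp) by linarith)
      linarith [hLp_eq, hmul]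
    have habs : |r - rp| = rp - r := by
      rw [abs_of_neg (by linarith [hrI.2] : r - rp < 0)]; ring
    have hFle : F r ≤ K * (rp - r) := (hF_facts r hrI).1
    have hCmx : 0 ≤ Cm * Real.exp (2 * κp * x) :=
      le_of_lt (mul_pos hCm_pos (Real.exp_pos _))
    calc F r + |r - rp| ≤ K * (rp - r) + (rp - r) := by rw [habs]; linarith
      _ = (K + 1) * ((rp - 𝔯) * Real.exp (Lp r)) := by rw [← hrp_r]; ring
      _ ≤ (K + 1) * ((rp - 𝔯) * (Real.exp (-(2 * κp) * B) * Real.exp (2 * κp * x))) := by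
          refine mul_le_mul_of_nonneg_left ?_ (by linarith)
          exact mul_le_mul_of_nonneg_left hexp_le (le_of_lt hp𝔯)
      _ = Cp * Real.exp (2 * κp * x) := by rw [hCpdef]; ring
      _ ≤ (Cp + Cm) * Real.exp (2 * κp * x) := by
          have h9 := mul_nonneg (le_of_lt hCm_pos) (le_of_lt (Real.exp_pos (2 * κp * x)))
          linarith
  · -- at -infinity
    apply Eventually.of_forall
    intro x
    set r := rfun x with hrdef
    have hrI := hrange x
    have hxr : X r = x := hsurj x
    have hx : x = cn * Ln r + cc * Lc r + cm * Lm r + cp * Lp r := by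
      rw [← hxr, hXeq r hrI]
    have hLm_eq : Lm r = 2 * κm * x - 2 * κm * (cn * Ln r + cc * Lc r + cp * Lp r) := by
      linear_combination (-(2 * κm)) * hx - Lm r * hcmκ
    have h2 : Lm r = Real.log ((r - rm) / (𝔯 - rm)) := by
      simp only [hLmdef]
      rw [abs_of_pos (div_pos (by linarith [hrI.1]) h𝔯m)]
    have hexp : Real.exp (Lm r) = (r - rm) / (𝔯 - rm) := by
      rw [h2, Real.exp_log (div_pos (by linarith [hrI.1]) h𝔯m)]
    have hr_rm : r - rm = (𝔯 - rm) * Real.exp (Lm r) := by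
      rw [hexp]; field_simp
    have hexp_le : Real.exp (Lm r) ≤ Real.exp (-(2 * κm) * B') * Real.exp (2 * κm * x) := by
      rw [← Real.exp_add]
      apply Real.exp_le_exp.mpr
      have hHB := hH_ge r hrI
      have hmul := mul_le_mul_of_nonneg_left hHB (show (0:ℝ) ≤ 2 * κm by linarith)
      linarith [hLm_eq, hmul]
    have habs : |r - rm| = r - rm := abs_of_pos (by linarith [hrI.1])
    have hFle : F r ≤ K * (r - rm) := (hF_facts r hrI).2
    calc F r + |r - rm| ≤ K * (r - rm) + (r - rm) := by rw [habs]; linarith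
      _ = (K + 1) * ((𝔯 - rm) * Real.exp (Lm r)) := by rw [← hr_rm]; ring
      _ ≤ (K + 1) * ((𝔯 - rm) * (Real.exp (-(2 * κm) * B') * Real.exp (2 * κm * x))) := by
          refine mul_le_mul_of_nonneg_left ?_ (by linarith)
          exact mul_le_mul_of_nonneg_left hexp_le (le_of_lt h𝔯m)
      _ = Cm * Real.exp (2 * κm * x) := by rw [hCmdef]; ring
      _ ≤ (Cp + Cm) * Real.exp (2 * κm * x) := by
          have h9 := mul_nonneg (le_of_lt hCp_pos) (le_of_lt (Real.exp_pos (2 * κm * x)))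
          linarith
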